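/- arXiv:2403.05072 — 2 statements merged into one kernel-verified Lean document; each statement's English description precedes it below -/
import Mathlib

section
/- For any partition λ of n that is not a hook (i.e., λ_2 ≥ 2) and any integer k ≥ 3, the inequality Σ_{u∈λ} h(u)^k < n^k + Σ_{u∈λ} |c(u)|^k is strict. -/
open Finset

/-- A Young diagram: a finite set of cells `(i, j)` with 1-based coordinates,
closed under decreasing either coordinate (down to 1).  Its rows are the
intervals `[1, λ_i]` for a weakly decreasing sequence `λ`. -/
def IsYoung (Y : Finset (ℕ × ℕ)) : Prop :=
  (∀ p ∈ Y, 1 ≤ p.1 ∧ 1 ≤ p.2) ∧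
    ∀ p ∈ Y, ∀ q : ℕ × ℕ, 1 ≤ q.1 → 1 ≤ q.2 → q.1 ≤ p.1 → q.2 ≤ p.2 → q ∈ Y

/-- `row Y i = λ_i`, the length of the `i`-th row. -/
def row (Y : Finset (ℕ × ℕ)) (i : ℕ) : ℕ := (Y.filter fun p => p.1 = i).card

/-- `col Y j = λ'_j`, the length of the `j`-th column (conjugate partition). -/
def col (Y : Finset (ℕ × ℕ)) (j : ℕ) : ℕ := (Y.filter fun p => p.2 = j).card

/-- Hook length `h(u) = λ_i + λ'_j - i - j + 1` of the cell `u = (i, j)`. -/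
def hk (Y : Finset (ℕ × ℕ)) (u : ℕ × ℕ) : ℤ :=
  (row Y u.1 : ℤ) + (col Y u.2 : ℤ) - u.1 - u.2 + 1

/-- Content `c(u) = j - i` of the cell `u = (i, j)`. -/
def ct (u : ℕ × ℕ) : ℤ := (u.2 : ℤ) - (u.1 : ℤ)

section Basics

variable {Y : Finset (ℕ × ℕ)}

lemma mem_le_row (hY : IsYoung Y) {i j : ℕ} (hp : (i, j) ∈ Y) : j ≤ row Y i := by
  classical
  have h1 : 1 ≤ j := (hY.1 _ hp).2
  have hsub : (Icc 1 j).image (fun t => (i, t)) ⊆ Y.filter fun p => p.1 = i := by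
    intro p hp'
    simp only [mem_image, mem_Icc] at hp'
    obtain ⟨t, ⟨ht1, ht2⟩, rfl⟩ := hp'
    simp only [mem_filter]
    exact ⟨hY.2 _ hp (i, t) (hY.1 _ hp).1 ht1 le_rfl ht2, trivial⟩
  have hcard := Finset.card_le_card hsub
  rwa [Finset.card_image_of_injective _ (fun a b h => (Prod.mk.injEq _ _ _ _).mp h |>.2),
    Nat.card_Icc] at hcard

lemma row_mem (hY : IsYoung Y) {i j : ℕ} (hi : 1 ≤ i) (hj : 1 ≤ j) (hij : j ≤ row Y i) : (i, j) ∈ Y := by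
  classical
  have hpos : 0 < (Y.filter fun p => p.1 = i).card := lt_of_lt_of_le hj hij
  have hne : ((Y.filter fun p => p.1 = i).image Prod.snd).Nonempty := by
    rw [Finset.image_nonempty]
    exact Finset.card_pos.mp hpos
  set q := ((Y.filter fun p => p.1 = i).image Prod.snd).max' hne with hq
  have hqmem : q ∈ (Y.filter fun p => p.1 = i).image Prod.snd := Finset.max'_mem _ _
  simp only [mem_image, mem_filter] at hqmem
  obtain ⟨p, ⟨hpY, hp1⟩, hp2⟩ := hqmem
  have hpq : p = (i, q) := by rw [← hp1, ← hp2]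
  rw [hpq] at hpY
  -- row Y i ≤ q
  have hsub : (Y.filter fun p => p.1 = i) ⊆ (Icc 1 q).image (fun t => (i, t)) := by
    intro p hp'
    have hp'' := hp'
    simp only [mem_filter] at hp''
    simp only [mem_image, mem_Icc]
    refine ⟨p.2, ⟨(hY.1 _ hp''.1).2, ?_⟩, ?_⟩
    · exact Finset.le_max' _ _ (Finset.mem_image_of_mem _ hp')
    · rw [← hp''.2]
  have hcard := Finset.card_le_card hsub
  rw [Finset.card_image_of_injective _ (fun a b h => (Prod.mk.injEq _ _ _ _).mp h |>.2),
    Nat.card_Icc] at hcard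
  have hjq : j ≤ q := le_trans hij (by simpa [row] using hcard)
  exact hY.2 _ hpY (i, j) hi hj le_rfl hjq

lemma mem_iff_row (hY : IsYoung Y) {i j : ℕ} : (i, j) ∈ Y ↔ 1 ≤ i ∧ 1 ≤ j ∧ j ≤ row Y i := by
  constructor
  · intro h
    exact ⟨(hY.1 _ h).1, (hY.1 _ h).2, mem_le_row hY h⟩
  · rintro ⟨h1, h2, h3⟩
    exact row_mem hY h1 h2 h3

lemma mem_le_col (hY : IsYoung Y) {i j : ℕ} (hp : (i, j) ∈ Y) : i ≤ col Y j := by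
  classical
  have h1 : 1 ≤ i := (hY.1 _ hp).1
  have hsub : (Icc 1 i).image (fun t => (t, j)) ⊆ Y.filter fun p => p.2 = j := by
    intro p hp'
    simp only [mem_image, mem_Icc] at hp'
    obtain ⟨t, ⟨ht1, ht2⟩, rfl⟩ := hp'
    simp only [mem_filter]
    exact ⟨hY.2 _ hp (t, j) ht1 (hY.1 _ hp).2 ht2 le_rfl, trivial⟩
  have hcard := Finset.card_le_card hsub
  rwa [Finset.card_image_of_injective _ (fun a b h => (Prod.mk.injEq _ _ _ _).mp h |>.1),
    Nat.card_Icc] at hcard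

lemma col_mem (hY : IsYoung Y) {i j : ℕ} (hi : 1 ≤ i) (hj : 1 ≤ j) (hij : i ≤ col Y j) : (i, j) ∈ Y := by
  classical
  have hpos : 0 < (Y.filter fun p => p.2 = j).card := lt_of_lt_of_le hi hij
  have hne : ((Y.filter fun p => p.2 = j).image Prod.fst).Nonempty := by
    rw [Finset.image_nonempty]
    exact Finset.card_pos.mp hpos
  set q := ((Y.filter fun p => p.2 = j).image Prod.fst).max' hne with hq
  have hqmem : q ∈ (Y.filter fun p => p.2 = j).image Prod.fst := Finset.max'_mem _ _
  simp only [mem_image, mem_filter] at hqmem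
  obtain ⟨p, ⟨hpY, hp2⟩, hp1⟩ := hqmem
  have hpq : p = (q, j) := by rw [← hp1, ← hp2]
  rw [hpq] at hpY
  have hsub : (Y.filter fun p => p.2 = j) ⊆ (Icc 1 q).image (fun t => (t, j)) := by
    intro p hp'
    have hp'' := hp'
    simp only [mem_filter] at hp''
    simp only [mem_image, mem_Icc]
    refine ⟨p.1, ⟨(hY.1 _ hp''.1).1, ?_⟩, ?_⟩
    · exact Finset.le_max' _ _ (Finset.mem_image_of_mem _ hp')
    · rw [← hp''.2]
  have hcard := Finset.card_le_card hsub
  rw [Finset.card_image_of_injective _ (fun a b h => (Prod.mk.injEq _ _ _ _).mp h |>.1),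
    Nat.card_Icc] at hcard
  have hiq : i ≤ q := le_trans hij (by simpa [col] using hcard)
  exact hY.2 _ hpY (i, j) hi hj hiq le_rfl

lemma mem_iff_col (hY : IsYoung Y) {i j : ℕ} : (i, j) ∈ Y ↔ 1 ≤ i ∧ 1 ≤ j ∧ i ≤ col Y j := by
  constructor
  · intro h
    exact ⟨(hY.1 _ h).1, (hY.1 _ h).2, mem_le_col hY h⟩
  · rintro ⟨h1, h2, h3⟩
    exact col_mem hY h1 h2 h3

lemma row_antitone (hY : IsYoung Y) {i i' : ℕ} (h1 : 1 ≤ i) (hii : i ≤ i') : row Y i' ≤ row Y i := by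
  rcases Nat.eq_zero_or_pos (row Y i') with h | h
  · omega
  · have hmem : (i', row Y i') ∈ Y := row_mem hY (le_trans h1 hii) h le_rfl
    have : (i, row Y i') ∈ Y := hY.2 _ hmem _ h1 h hii le_rfl
    exact mem_le_row hY this

lemma col_antitone (hY : IsYoung Y) {j j' : ℕ} (h1 : 1 ≤ j) (hjj : j ≤ j') : col Y j' ≤ col Y j := by
  rcases Nat.eq_zero_or_pos (col Y j') with h | h
  · omega
  · have hmem : (col Y j', j') ∈ Y := col_mem hY h (le_trans h1 hjj) le_rfl
    have : (col Y j', j) ∈ Y := hY.2 _ hmem _ h h1 le_rfl hjj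
    exact mem_le_col hY this

lemma row_le_iff_col (hY : IsYoung Y) {i j : ℕ} (hi : 1 ≤ i) (hj : 1 ≤ j) : j ≤ row Y i ↔ i ≤ col Y j := by
  constructor
  · intro h; exact mem_le_col hY (row_mem hY hi hj h)
  · intro h; exact mem_le_row hY (col_mem hY hi hj h)

end Basics

lemma sq_ineq (x y A e : ℕ) (hx : 1 ≤ x) (hy : 1 ≤ y) :
    (x+e)^2 + (y+e)^2 + (A+e)^2 + 1 ≤ (x+y+A+2*e)^2 := by
  have hxy : 1 ≤ x * y := Nat.one_le_iff_ne_zero.mpr (by positivity)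
  nlinarith [hxy, Nat.zero_le (x*A), Nat.zero_le (x*e), Nat.zero_le (y*A),
    Nat.zero_le (y*e), Nat.zero_le (A*e), Nat.zero_le (e*e)]

lemma t1 (m x y A e : ℕ) (hm : 2 ≤ m) (hx : 1 ≤ x) (hy : 1 ≤ y) :
    (x+e)^m + (y+e)^m + (A+e)^m + 1 ≤ (x+y+A+2*e)^m := by
  obtain ⟨m', rfl⟩ : ∃ m', m = m' + 2 := ⟨m - 2, by omega⟩
  have h2 := sq_ineq x y A e hx hy
  have hS1 : 1 ≤ (x+y+A+2*e) := by omega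
  calc (x+e)^(m'+2) + (y+e)^(m'+2) + (A+e)^(m'+2) + 1
      = (x+e)^m' * (x+e)^2 + (y+e)^m' * (y+e)^2 + (A+e)^m' * (A+e)^2 + 1 := by ring
    _ ≤ (x+y+A+2*e)^m' * (x+e)^2 + (x+y+A+2*e)^m' * (y+e)^2
        + (x+y+A+2*e)^m' * (A+e)^2 + (x+y+A+2*e)^m' * 1 := by
        have b1 := Nat.pow_le_pow_left (show x+e ≤ x+y+A+2*e by omega) m'
        have b2 := Nat.pow_le_pow_left (show y+e ≤ x+y+A+2*e by omega) m'
        have b3 := Nat.pow_le_pow_left (show A+e ≤ x+y+A+2*e by omega) m'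
        have b4 : 1 ≤ (x+y+A+2*e)^m' * 1 := by
          rw [mul_one]; exact Nat.one_le_pow _ _ (by omega)
        exact add_le_add (add_le_add (add_le_add (Nat.mul_le_mul_right _ b1)
          (Nat.mul_le_mul_right _ b2)) (Nat.mul_le_mul_right _ b3)) b4
    _ = (x+y+A+2*e)^m' * ((x+e)^2 + (y+e)^2 + (A+e)^2 + 1) := by ring
    _ ≤ (x+y+A+2*e)^m' * (x+y+A+2*e)^2 := Nat.mul_le_mul_left _ h2
    _ = (x+y+A+2*e)^(m'+2) := by ring

lemma term0 (j x y A e : ℕ) (hj : 1 ≤ j) :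
    x^j + y^j + A^j ≤ (x+y+A+e)^j := by
  have h1 : x^j + y^j ≤ (x+y)^j := pow_add_pow_le (Nat.zero_le x) (Nat.zero_le y) (by omega)
  have h2 : (x+y)^j + A^j ≤ (x+y+A)^j := pow_add_pow_le (Nat.zero_le _) (Nat.zero_le A) (by omega)
  have h3 : (x+y+A)^j ≤ (x+y+A+e)^j := Nat.pow_le_pow_left (by omega) _
  omega

lemma term1 (j x y A e : ℕ) (hx : 1 ≤ x) (hy : 1 ≤ y) (hj : 1 ≤ j) :
    (x+e)*x^j + (y+e)*y^j + (A+e)*A^j ≤ (x+y+A+2*e)*(x+y+A+e)^j := by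
  have h1 : x^j + (y+A+e)^j ≤ (x+y+A+e)^j := by
    have := pow_add_pow_le (x := (x:ℕ)) (y := (y+A+e:ℕ)) (n := j) (Nat.zero_le _) (Nat.zero_le _) (by omega)
    calc x^j + (y+A+e)^j ≤ (x+(y+A+e))^j := this
      _ = (x+y+A+e)^j := by ring_nf
  have h2 : y^j ≤ (x+y+A+e)^j := Nat.pow_le_pow_left (by omega) _
  have h3 : A^j ≤ (x+y+A+e)^j := Nat.pow_le_pow_left (by omega) _
  have h4 : A^j ≤ (y+A+e)^j := Nat.pow_le_pow_left (by omega) _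
  calc (x+e)*x^j + (y+e)*y^j + (A+e)*A^j
      ≤ (x+e)*x^j + (x+e)*(y+A+e)^j + (y+e)*y^j + A*A^j := by
        have h5 : e * A^j ≤ (x+e) * (y+A+e)^j := Nat.mul_le_mul (by omega) h4
        nlinarith [h5]
    _ = (x+e)*(x^j + (y+A+e)^j) + (y+e)*y^j + A*A^j := by ring
    _ ≤ (x+e)*(x+y+A+e)^j + (y+e)*(x+y+A+e)^j + A*(x+y+A+e)^j := by gcongr
    _ = (x+y+A+2*e)*(x+y+A+e)^j := by ring

lemma term2 (i j x y A e : ℕ) (hi : 2 ≤ i) (hx : 1 ≤ x) (hy : 1 ≤ y) :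
    (x+e)^i * x^j + (y+e)^i * y^j + (A+e)^i * A^j ≤ (x+y+A+2*e)^i * (x+y+A+e)^j := by
  have h1 : (x+e)^i + (y+e)^i + (A+e)^i ≤ (x+y+A+2*e)^i := by
    have := t1 i x y A e hi hx hy; omega
  have h2 : x^j ≤ (x+y+A+e)^j := Nat.pow_le_pow_left (by omega) _
  have h3 : y^j ≤ (x+y+A+e)^j := Nat.pow_le_pow_left (by omega) _
  have h4 : A^j ≤ (x+y+A+e)^j := Nat.pow_le_pow_left (by omega) _
  calc (x+e)^i * x^j + (y+e)^i * y^j + (A+e)^i * A^j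
      ≤ (x+e)^i * (x+y+A+e)^j + (y+e)^i * (x+y+A+e)^j + (A+e)^i * (x+y+A+e)^j := by gcongr
    _ = ((x+e)^i + (y+e)^i + (A+e)^i) * (x+y+A+e)^j := by ring
    _ ≤ (x+y+A+2*e)^i * (x+y+A+e)^j := Nat.mul_le_mul_right _ h1

lemma pow_diff (k b d : ℕ) :
    (b+d)^k = b^k + d * ∑ i ∈ range k, (b+d)^i * b^(k-1-i) := by
  have h := geom_sum₂_mul ((b:ℤ)+d) (b:ℤ) k
  have h2 : ((b:ℤ)+d) - b = d := by ring
  rw [h2] at h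
  have : ((b+d:ℕ):ℤ)^k = (b:ℤ)^k + d * ∑ i ∈ range k, ((b+d:ℕ):ℤ)^i * (b:ℤ)^(k-1-i) := by
    push_cast
    linarith [h]
  exact_mod_cast this

lemma key_step (k : ℕ) (hk3 : 3 ≤ k) (x y A e : ℕ) (hx : 1 ≤ x) (hy : 1 ≤ y) :
    (x+e)^k + (y+e)^k + (A+e)^k + (x+y+A+e)^k + e
      ≤ x^k + y^k + A^k + (x+y+A+2*e)^k := by
  have hd : x+y+A+2*e = (x+y+A+e)+e := by ring
  rw [pow_diff k x e, pow_diff k y e, pow_diff k A e, hd, pow_diff k (x+y+A+e) e]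
  have hkey : ∑ i ∈ range k, (x+e)^i * x^(k-1-i) + ∑ i ∈ range k, (y+e)^i * y^(k-1-i)
      + ∑ i ∈ range k, (A+e)^i * A^(k-1-i) + 1
      ≤ ∑ i ∈ range k, ((x+y+A+e)+e)^i * (x+y+A+e)^(k-1-i) := by
    obtain ⟨k', rfl⟩ : ∃ k', k = k' + 1 := ⟨k - 1, by omega⟩
    rw [sum_range_succ, sum_range_succ, sum_range_succ, sum_range_succ]
    have htop : (x+e)^k' * x^(k'+1-1-k') + (y+e)^k' * y^(k'+1-1-k') + (A+e)^k' * A^(k'+1-1-k') + 1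
        ≤ ((x+y+A+e)+e)^k' * (x+y+A+e)^(k'+1-1-k') := by
      simp only [Nat.add_sub_cancel, Nat.sub_self, pow_zero, mul_one]
      have := t1 k' x y A e (by omega) hx hy
      calc (x+e)^k' + (y+e)^k' + (A+e)^k' + 1 ≤ (x+y+A+2*e)^k' := this
        _ = ((x+y+A+e)+e)^k' := by ring_nf
    have hrest : ∑ i ∈ range k', (x+e)^i * x^(k'+1-1-i) + ∑ i ∈ range k', (y+e)^i * y^(k'+1-1-i)
        + ∑ i ∈ range k', (A+e)^i * A^(k'+1-1-i)
        ≤ ∑ i ∈ range k', ((x+y+A+e)+e)^i * (x+y+A+e)^(k'+1-1-i) := by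
      rw [← Finset.sum_add_distrib, ← Finset.sum_add_distrib]
      apply Finset.sum_le_sum
      intro i hi
      rw [Finset.mem_range] at hi
      have hj : 1 ≤ k'+1-1-i := by omega
      have hSe : (x+y+A+e)+e = x+y+A+2*e := by ring
      rw [hSe]
      match i with
      | 0 => simpa using term0 (k'+1-1-0) x y A e hj
      | 1 => simpa [pow_one] using term1 (k'+1-1-1) x y A e hx hy (by omega)
      | (i+2) => exact term2 (i+2) (k'+1-1-(i+2)) x y A e (by omega) hx hy
    omega
  nlinarith [Nat.mul_le_mul_left e hkey]
-- the summed, telescoped step inequality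
lemma sum_step (k : ℕ) (hk3 : 3 ≤ k) (a b : ℕ) (ha : 1 ≤ a) (hb : 1 ≤ b)
    (r : ℕ → ℕ) (hr : ∀ t, t < b - 1 → 1 ≤ r (t+2) ∧ r (t+2) ≤ a) :
    ∑ t ∈ range (b-1), ((b + r (t+2) - (t+2) : ℕ) : ℤ)^k
      + ∑ t ∈ range (b-1), ((a + t : ℕ) : ℤ)^k
      + ((∑ t ∈ range (b-1), (r (t+2) - 1) : ℕ) : ℤ)^k
      + ((∑ t ∈ range (b-1), (r (t+2) - 1) : ℕ) : ℤ)
      + ((a + b - 1 : ℕ) : ℤ)^k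
    ≤ ((a + b - 1 + ∑ t ∈ range (b-1), (r (t+2) - 1) : ℕ) : ℤ)^k
      + ∑ t ∈ range (b-1), ((b - t - 1 : ℕ) : ℤ)^k
      + ∑ t ∈ range (b-1), ((a + t + 1 - r (t+2) : ℕ) : ℤ)^k := by
  set E : ℕ → ℕ := fun t => ∑ s ∈ range t, (r (s+2) - 1) with hE
  have hEsucc : ∀ t, E (t+1) = E t + (r (t+2) - 1) := by
    intro t; simp [hE, sum_range_succ]
  -- per-t inequality, in ℤ
  have hpt : ∀ t ∈ range (b-1),
      ((b + r (t+2) - (t+2) : ℕ) : ℤ)^k + ((a + t : ℕ) : ℤ)^k + ((E (t+1) : ℕ) : ℤ)^k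
        + ((a + b - 1 + E t : ℕ) : ℤ)^k + ((r (t+2) - 1 : ℕ) : ℤ)
      ≤ ((b - t - 1 : ℕ) : ℤ)^k + ((a + t + 1 - r (t+2) : ℕ) : ℤ)^k + ((E t : ℕ) : ℤ)^k
        + ((a + b - 1 + E (t+1) : ℕ) : ℤ)^k := by
    intro t ht
    rw [mem_range] at ht
    obtain ⟨hr1, hr2⟩ := hr t ht
    have hnat := key_step k hk3 (b - t - 1) (a + t - (r (t+2) - 1)) (E t) (r (t+2) - 1)
      (by omega) (by omega)
    have e1 : b - t - 1 + (r (t+2) - 1) = b + r (t+2) - (t+2) := by omega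
    have e2 : a + t - (r (t+2) - 1) + (r (t+2) - 1) = a + t := by omega
    have e3 : E t + (r (t+2) - 1) = E (t+1) := (hEsucc t).symm
    have e4 : b - t - 1 + (a + t - (r (t+2) - 1)) + E t + (r (t+2) - 1) = a + b - 1 + E t := by
      omega
    have e5 : b - t - 1 + (a + t - (r (t+2) - 1)) + E t + 2 * (r (t+2) - 1)
        = a + b - 1 + E (t+1) := by rw [hEsucc t]; omega
    have e6 : a + t - (r (t+2) - 1) = a + t + 1 - r (t+2) := by omega
    rw [e1, e2, e3, e4, e5, e6] at hnat
    exact_mod_cast hnat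
  have hsum := Finset.sum_le_sum hpt
  simp only [sum_add_distrib] at hsum
  have tel1 : ∑ t ∈ range (b-1), (((E (t+1) : ℕ) : ℤ)^k - ((E t : ℕ) : ℤ)^k)
      = ((E (b-1) : ℕ) : ℤ)^k - ((E 0 : ℕ) : ℤ)^k :=
    sum_range_sub (fun t => ((E t : ℕ) : ℤ)^k) (b-1)
  have tel2 : ∑ t ∈ range (b-1), (((a + b - 1 + E (t+1) : ℕ) : ℤ)^k - ((a + b - 1 + E t : ℕ) : ℤ)^k)
      = ((a + b - 1 + E (b-1) : ℕ) : ℤ)^k - ((a + b - 1 + E 0 : ℕ) : ℤ)^k :=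
    sum_range_sub (fun t => ((a + b - 1 + E t : ℕ) : ℤ)^k) (b-1)
  rw [sum_sub_distrib] at tel1 tel2
  have hE0 : E 0 = 0 := by simp [hE]
  have hcast : ((∑ t ∈ range (b-1), (r (t+2) - 1) : ℕ) : ℤ)
      = ∑ t ∈ range (b-1), ((r (t+2) - 1 : ℕ) : ℤ) := by push_cast; rfl
  have hzk : ((0:ℕ):ℤ)^k = 0 := by
    simp [zero_pow (by omega : k ≠ 0)]
  rw [hE0] at tel1 tel2
  rw [hzk] at tel1
  simp only [Nat.add_zero] at tel2
  have hEb : E (b-1) = ∑ t ∈ range (b-1), (r (t+2) - 1) := rfl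
  rw [hEb] at tel1 tel2
  rw [← hcast] at hsum
  linarith [hsum, tel1, tel2]
section Decomp

variable {Y : Finset (ℕ × ℕ)}

lemma Yrow1_eq (hY : IsYoung Y) :
    (Y.filter fun p => p.1 = 1) = (Icc 1 (row Y 1)).image (fun j => (1, j)) := by
  ext ⟨i, j⟩
  simp only [mem_filter, mem_image, mem_Icc]
  constructor
  · rintro ⟨hp, h1⟩
    subst h1
    exact ⟨j, ⟨(hY.1 _ hp).2, mem_le_row hY hp⟩, rfl⟩
  · rintro ⟨j', ⟨hj1, hj2⟩, hj'⟩
    rw [Prod.mk.injEq] at hj'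
    obtain ⟨rfl, rfl⟩ := hj'
    exact ⟨row_mem hY le_rfl hj1 hj2, rfl⟩

lemma Ycol1_eq (hY : IsYoung Y) :
    (Y.filter fun p => ¬(p.1 = 1) ∧ p.2 = 1) = (Icc 2 (col Y 1)).image (fun i => (i, 1)) := by
  ext ⟨i, j⟩
  simp only [mem_filter, mem_image, mem_Icc]
  constructor
  · rintro ⟨hp, h1, h2⟩
    subst h2
    have := (hY.1 _ hp).1
    exact ⟨i, ⟨by omega, mem_le_col hY hp⟩, rfl⟩
  · rintro ⟨i', ⟨hi1, hi2⟩, hi'⟩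
    rw [Prod.mk.injEq] at hi'
    obtain ⟨rfl, rfl⟩ := hi'
    exact ⟨col_mem hY (by omega) le_rfl hi2, by omega, rfl⟩

lemma card_eq_sum_rows (hY : IsYoung Y) :
    Y.card = ∑ i ∈ Icc 1 (col Y 1), row Y i := by
  classical
  have hbi : Y = (Icc 1 (col Y 1)).biUnion
      (fun i => (Icc 1 (row Y i)).image (fun j => (i, j))) := by
    ext ⟨i, j⟩
    simp only [mem_biUnion, mem_image, mem_Icc]
    constructor
    · intro hp
      have h1 : (i, 1) ∈ Y := hY.2 _ hp (i, 1) (hY.1 _ hp).1 le_rfl le_rfl (hY.1 _ hp).2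
      refine ⟨i, ⟨(hY.1 _ hp).1, mem_le_col hY h1⟩, j, ⟨(hY.1 _ hp).2, mem_le_row hY hp⟩, rfl⟩
    · rintro ⟨i', ⟨hi1, hi2⟩, j', ⟨hj1, hj2⟩, he⟩
      rw [Prod.mk.injEq] at he
      obtain ⟨rfl, rfl⟩ := he
      exact row_mem hY hi1 hj1 hj2
  have h2 := congrArg Finset.card hbi
  rw [Finset.card_biUnion] at h2
  · rw [h2]
    apply Finset.sum_congr rfl
    intro i _
    rw [Finset.card_image_of_injective _ (fun x y h => by injection h), Nat.card_Icc]
    omega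
  · intro x _ y _ hxy
    simp only [Finset.disjoint_left, mem_image, mem_Icc]
    rintro p ⟨j1, _, rfl⟩ ⟨j2, _, he⟩
    injection he with h1 h2
    omega

end Decomp
noncomputable section MuSection

open Classical

def muY (Y : Finset (ℕ × ℕ)) : Finset (ℕ × ℕ) :=
  ((Y.filter fun p => ¬(p.1 = 1) ∧ ¬(p.2 = 1)).image (fun p => (p.1 - 1, p.2 - 1)))

variable {Y : Finset (ℕ × ℕ)}

lemma mem_muY (hY : IsYoung Y) {i j : ℕ} :
    (i, j) ∈ muY Y ↔ 1 ≤ i ∧ 1 ≤ j ∧ (i + 1, j + 1) ∈ Y := by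
  unfold muY
  simp only [mem_image, mem_filter]
  constructor
  · rintro ⟨p, ⟨hp, h1, h2⟩, he⟩
    have hc := hY.1 _ hp
    rw [Prod.mk.injEq] at he
    have e1 : p.1 = i + 1 := by omega
    have e2 : p.2 = j + 1 := by omega
    refine ⟨by omega, by omega, ?_⟩
    rw [← e1, ← e2]
    simpa using hp
  · rintro ⟨h1, h2, hp⟩
    exact ⟨(i+1, j+1), ⟨hp, by omega, by omega⟩, by simp⟩

lemma muY_isYoung (hY : IsYoung Y) : IsYoung (muY Y) := by
  constructor
  · rintro ⟨i, j⟩ hp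
    exact ⟨((mem_muY hY).mp hp).1, ((mem_muY hY).mp hp).2.1⟩
  · rintro ⟨i, j⟩ hp ⟨i', j'⟩ h1 h2 h3 h4
    obtain ⟨hi, hj, hmem⟩ := (mem_muY hY).mp hp
    exact (mem_muY hY).mpr ⟨h1, h2, hY.2 _ hmem (i'+1, j'+1) (by omega) (by omega)
      (by simpa using h3) (by simpa using h4)⟩

lemma muY_card (hY : IsYoung Y) :
    (muY Y).card = (Y.filter fun p => ¬(p.1 = 1) ∧ ¬(p.2 = 1)).card := by
  unfold muY
  apply Finset.card_image_of_injOn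
  intro p hp q hq he
  simp only [coe_filter, Set.mem_setOf_eq] at hp hq
  have h1 := hY.1 _ hp.1
  have h2 := hY.1 _ hq.1
  rw [Prod.mk.injEq] at he
  have : p.1 = q.1 := by omega
  have : p.2 = q.2 := by omega
  exact Prod.ext (by omega) (by omega)

lemma row_muY (hY : IsYoung Y) (i : ℕ) (hi : 1 ≤ i) :
    row (muY Y) i = row Y (i + 1) - 1 := by
  unfold row
  have he : ((muY Y).filter fun p => p.1 = i)
      = (Icc 1 (row Y (i+1) - 1)).image (fun j => (i, j)) := by
    ext ⟨i', j⟩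
    simp only [mem_filter, mem_image, mem_Icc]
    constructor
    · rintro ⟨hp, rfl⟩
      obtain ⟨h1, h2, h3⟩ := (mem_muY hY).mp hp
      have h4 := mem_le_row hY h3
      exact ⟨j, ⟨h2, by omega⟩, rfl⟩
    · rintro ⟨j', ⟨hj1, hj2⟩, he⟩
      rw [Prod.mk.injEq] at he
      obtain ⟨he1, he2⟩ := he
      subst he1; subst he2
      refine ⟨(mem_muY hY).mpr ⟨hi, hj1, row_mem hY (by omega) (by omega) (by omega)⟩, rfl⟩
  rw [he, Finset.card_image_of_injective _ (fun x y h => by injection h), Nat.card_Icc]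
  have hr : row Y (i+1) = (Y.filter fun p => p.1 = i+1).card := rfl
  omega

lemma col_muY (hY : IsYoung Y) (j : ℕ) (hj : 1 ≤ j) :
    col (muY Y) j = col Y (j + 1) - 1 := by
  unfold col
  have he : ((muY Y).filter fun p => p.2 = j)
      = (Icc 1 (col Y (j+1) - 1)).image (fun i => (i, j)) := by
    ext ⟨i, j'⟩
    simp only [mem_filter, mem_image, mem_Icc]
    constructor
    · rintro ⟨hp, rfl⟩
      obtain ⟨h1, h2, h3⟩ := (mem_muY hY).mp hp
      have h4 := mem_le_col hY h3
      exact ⟨i, ⟨h1, by omega⟩, rfl⟩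
    · rintro ⟨i', ⟨hi1, hi2⟩, he⟩
      rw [Prod.mk.injEq] at he
      obtain ⟨he1, he2⟩ := he
      subst he1; subst he2
      refine ⟨(mem_muY hY).mpr ⟨hi1, hj, col_mem hY (by omega) (by omega) (by omega)⟩, rfl⟩
  rw [he, Finset.card_image_of_injective _ (fun x y h => by injection h), Nat.card_Icc]
  have hc : col Y (j+1) = (Y.filter fun p => p.2 = j+1).card := rfl
  omega

lemma hk_muY (hY : IsYoung Y) {v : ℕ × ℕ} (hv : v ∈ muY Y) :
    hk (muY Y) v = hk Y (v.1 + 1, v.2 + 1) := by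
  obtain ⟨i, j⟩ := v
  obtain ⟨h1, h2, h3⟩ := (mem_muY hY).mp hv
  have hr : 1 ≤ row Y (i + 1) := le_trans (by omega) (mem_le_row hY h3)
  have hc : 1 ≤ col Y (j + 1) := le_trans (by omega) (mem_le_col hY h3)
  unfold hk
  simp only [row_muY hY i h1, col_muY hY j h2]
  rw [Nat.cast_sub hr, Nat.cast_sub hc]
  push_cast
  ring

lemma sum_muY (hY : IsYoung Y) (f : ℕ × ℕ → ℤ) :
    ∑ p ∈ Y.filter (fun p => ¬(p.1 = 1) ∧ ¬(p.2 = 1)), f p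
      = ∑ v ∈ muY Y, f (v.1 + 1, v.2 + 1) := by
  unfold muY
  rw [Finset.sum_image]
  · apply Finset.sum_congr rfl
    intro p hp
    simp only [mem_filter] at hp
    have h1 := hY.1 _ hp.1
    have e1 : p.1 - 1 + 1 = p.1 := by omega
    have e2 : p.2 - 1 + 1 = p.2 := by omega
    rw [e1, e2]
  · intro p hp q hq he
    simp only [mem_coe, mem_filter] at hp hq
    have h1 := hY.1 _ hp.1
    have h2 := hY.1 _ hq.1
    rw [Prod.mk.injEq] at he
    exact Prod.ext (by omega) (by omega)

end MuSection
section Complement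

variable {Y : Finset (ℕ × ℕ)}

lemma complement_sum (hY : IsYoung Y) (h11 : (1, 1) ∈ Y) (k : ℕ) :
    ∑ j ∈ Icc 1 (row Y 1), ((row Y 1 + col Y j - j : ℕ) : ℤ)^k
      + ∑ i ∈ Icc 2 (col Y 1), ((row Y 1 + i - 1 - row Y i : ℕ) : ℤ)^k
    = ∑ t ∈ Icc 1 (row Y 1 + col Y 1 - 1), ((t : ℕ) : ℤ)^k := by
  classical
  set a := row Y 1 with ha
  set b := col Y 1 with hb
  have ha1 : 1 ≤ a := mem_le_row hY h11
  have hb1 : 1 ≤ b := mem_le_col hY h11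
  -- basic facts
  have hcol_le : ∀ j, 1 ≤ j → col Y j ≤ b := fun j hj => col_antitone hY le_rfl hj
  have hcol_ge : ∀ j, 1 ≤ j → j ≤ a → 1 ≤ col Y j := by
    intro j hj hja
    exact le_trans le_rfl (mem_le_col hY (row_mem hY le_rfl hj hja))
  have hrow_le : ∀ i, 1 ≤ i → row Y i ≤ a := fun i hi => row_antitone hY le_rfl hi
  have hrow_ge : ∀ i, 1 ≤ i → i ≤ b → 1 ≤ row Y i := by
    intro i hi hib
    exact le_trans le_rfl (mem_le_row hY (col_mem hY hi le_rfl hib))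
  set f : ℕ → ℕ := fun j => a + col Y j - j with hf
  set g : ℕ → ℕ := fun i => a + i - 1 - row Y i with hg
  have hinj_f : ∀ x ∈ Icc 1 a, ∀ y ∈ Icc 1 a, f x = f y → x = y := by
    intro x hx y hy hxy
    simp only [mem_Icc] at hx hy
    rcases Nat.lt_or_ge x y with h | h
    · have hc := col_antitone hY (by omega : 1 ≤ x) (le_of_lt h)
      have h1 := hcol_ge x (by omega) (by omega)
      simp only [hf] at hxy; omega
    rcases Nat.lt_or_ge y x with h' | h'
    · have hc := col_antitone hY (by omega : 1 ≤ y) (le_of_lt h')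
      have h1 := hcol_ge y (by omega) (by omega)
      simp only [hf] at hxy; omega
    omega
  have hinj_g : ∀ x ∈ Icc 2 b, ∀ y ∈ Icc 2 b, g x = g y → x = y := by
    intro x hx y hy hxy
    simp only [mem_Icc] at hx hy
    rcases Nat.lt_or_ge x y with h | h
    · have hc := row_antitone hY (by omega : 1 ≤ x) (le_of_lt h)
      have h1 := hrow_le x (by omega)
      have h2 := hrow_le y (by omega)
      simp only [hg] at hxy; omega
    rcases Nat.lt_or_ge y x with h' | h'
    · have hc := row_antitone hY (by omega : 1 ≤ y) (le_of_lt h')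
      have h1 := hrow_le x (by omega)
      have h2 := hrow_le y (by omega)
      simp only [hg] at hxy; omega
    omega
  have hdisj : Disjoint ((Icc 1 a).image f) ((Icc 2 b).image g) := by
    rw [Finset.disjoint_left]
    rintro x hx hx'
    simp only [mem_image, mem_Icc] at hx hx'
    obtain ⟨j, ⟨hj1, hj2⟩, rfl⟩ := hx
    obtain ⟨i, ⟨hi1, hi2⟩, hgi⟩ := hx'
    by_cases hmem : (i, j) ∈ Y
    · have h1 := mem_le_row hY hmem
      have h2 := mem_le_col hY hmem
      have h3 := hrow_le i (by omega)
      simp only [hf, hg] at hgi; omega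
    · have h1 : ¬ (j ≤ row Y i) := fun hc => hmem (row_mem hY (by omega) hj1 hc)
      have h2 : ¬ (i ≤ col Y j) := fun hc => hmem (col_mem hY (by omega) hj1 hc)
      have h3 := hcol_ge j hj1 hj2
      simp only [hf, hg] at hgi; omega
  have hsub : ((Icc 1 a).image f) ∪ ((Icc 2 b).image g) ⊆ Icc 1 (a + b - 1) := by
    intro x hx
    simp only [mem_union, mem_image, mem_Icc] at hx ⊢
    rcases hx with ⟨j, ⟨hj1, hj2⟩, rfl⟩ | ⟨i, ⟨hi1, hi2⟩, rfl⟩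
    · have h1 := hcol_ge j hj1 hj2
      have h2 := hcol_le j hj1
      simp only [hf]; omega
    · have h1 := hrow_le i (by omega)
      have h2 := hrow_ge i (by omega) hi2
      simp only [hg]; omega
  have hcards : (((Icc 1 a).image f) ∪ ((Icc 2 b).image g)).card = a + b - 1 := by
    rw [Finset.card_union_of_disjoint hdisj, Finset.card_image_of_injOn,
      Finset.card_image_of_injOn, Nat.card_Icc, Nat.card_Icc]
    · omega
    · intro x hx y hy h; exact hinj_g x (by simpa using hx) y (by simpa using hy) h
    · intro x hx y hy h; exact hinj_f x (by simpa using hx) y (by simpa using hy) h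
  have huniv : ((Icc 1 a).image f) ∪ ((Icc 2 b).image g) = Icc 1 (a + b - 1) := by
    apply Finset.eq_of_subset_of_card_le hsub
    rw [hcards, Nat.card_Icc]; omega
  calc ∑ j ∈ Icc 1 a, ((f j : ℕ) : ℤ)^k + ∑ i ∈ Icc 2 b, ((g i : ℕ) : ℤ)^k
      = ∑ x ∈ (Icc 1 a).image f, ((x : ℕ) : ℤ)^k + ∑ x ∈ (Icc 2 b).image g, ((x : ℕ) : ℤ)^k := by
        rw [Finset.sum_image hinj_f, Finset.sum_image hinj_g]
    _ = ∑ x ∈ ((Icc 1 a).image f) ∪ ((Icc 2 b).image g), ((x : ℕ) : ℤ)^k := by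
        rw [Finset.sum_union hdisj]
    _ = ∑ t ∈ Icc 1 (a + b - 1), ((t : ℕ) : ℤ)^k := by rw [huniv]

end Complement
lemma sum_range_split (F : ℕ → ℤ) (p q : ℕ) :
    ∑ t ∈ range (p+q), F t = ∑ t ∈ range p, F t + ∑ t ∈ range q, F (p+t) := by
  have h := Finset.sum_Ico_consecutive F (Nat.zero_le p) (Nat.le_add_right p q)
  have h2 : ∑ i ∈ Ico p (p+q), F i = ∑ t ∈ range q, F (p+t) := by
    rw [Finset.sum_Ico_eq_sum_range]
    simp
  rw [range_eq_Ico, ← h, h2, ← range_eq_Ico]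

section MainStep

variable {Y : Finset (ℕ × ℕ)}

lemma main_step (k : ℕ) (hk3 : 3 ≤ k) (hY : IsYoung Y) (h11 : (1, 1) ∈ Y) :
    (muY Y).card + (row Y 1 + col Y 1 - 1) = Y.card ∧
    ∑ u ∈ Y, hk Y u ^ k + ((muY Y).card : ℤ)^k + ∑ u ∈ muY Y, |ct u|^k + ((muY Y).card : ℤ)
      ≤ (Y.card : ℤ)^k + ∑ u ∈ Y, |ct u|^k + ∑ u ∈ muY Y, hk (muY Y) u ^ k := by
  classical
  set a := row Y 1 with ha
  set b := col Y 1 with hb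
  have ha1 : 1 ≤ a := mem_le_row hY h11
  have hb1 : 1 ≤ b := mem_le_col hY h11
  have hcol_le : ∀ j, 1 ≤ j → col Y j ≤ b := fun j hj => col_antitone hY le_rfl hj
  have hcol_ge : ∀ j, 1 ≤ j → j ≤ a → 1 ≤ col Y j := by
    intro j hj hja
    exact le_trans le_rfl (mem_le_col hY (row_mem hY le_rfl hj hja))
  have hrow_le : ∀ i, 1 ≤ i → row Y i ≤ a := fun i hi => row_antitone hY le_rfl hi
  have hrow_ge : ∀ i, 1 ≤ i → i ≤ b → 1 ≤ row Y i := by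
    intro i hi hib
    exact le_trans le_rfl (mem_le_row hY (col_mem hY hi le_rfl hib))
  -- generic sum decomposition
  have hsplit : ∀ f : ℕ × ℕ → ℤ, ∑ u ∈ Y, f u
      = ∑ j ∈ Icc 1 a, f (1, j) + ∑ i ∈ Icc 2 b, f (i, 1)
        + ∑ v ∈ muY Y, f (v.1 + 1, v.2 + 1) := by
    intro f
    have h1 := Finset.sum_filter_add_sum_filter_not Y (fun p => p.1 = 1) f
    have h2 := Finset.sum_filter_add_sum_filter_not
      (Y.filter (fun p => ¬(p.1 = 1))) (fun p => p.2 = 1) f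
    rw [Finset.filter_filter, Finset.filter_filter] at h2
    have e1 : ∑ p ∈ Y.filter (fun p => p.1 = 1), f p = ∑ j ∈ Icc 1 a, f (1, j) := by
      rw [Yrow1_eq hY, Finset.sum_image]
      intro x _ y _ h; injection h
    have e2 : ∑ p ∈ Y.filter (fun p => ¬(p.1 = 1) ∧ p.2 = 1), f p
        = ∑ i ∈ Icc 2 b, f (i, 1) := by
      rw [Ycol1_eq hY, Finset.sum_image]
      intro x _ y _ h; injection h
    have e3 := sum_muY hY f
    rw [e1] at h1
    rw [e2, e3] at h2
    linarith [h1, h2]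
  -- first-hook values
  have hkrow1 : ∀ j ∈ Icc 1 a, hk Y (1, j) ^ k = ((a + col Y j - j : ℕ) : ℤ)^k := by
    intro j hj
    simp only [mem_Icc] at hj
    have h1 : j ≤ a + col Y j := by omega
    unfold hk
    rw [Nat.cast_sub h1]
    push_cast
    ring_nf
    rw [ha]; ring
  have hkcol1 : ∀ i ∈ Icc 2 b, hk Y (i, 1) ^ k = ((b + row Y i - i : ℕ) : ℤ)^k := by
    intro i hi
    simp only [mem_Icc] at hi
    have h1 : i ≤ b + row Y i := by omega
    unfold hk
    rw [Nat.cast_sub h1]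
    push_cast
    ring_nf
    rw [hb]; ring
  have ctrow1 : ∀ j ∈ Icc 1 a, |ct (1, j)| ^ k = ((j - 1 : ℕ) : ℤ)^k := by
    intro j hj
    simp only [mem_Icc] at hj
    have h0 : ct (1, j) = ((j - 1 : ℕ) : ℤ) := by
      unfold ct
      rw [Nat.cast_sub hj.1]
      try push_cast
      try ring
    rw [h0]
    rw [abs_of_nonneg (Int.natCast_nonneg _)]
  have ctcol1 : ∀ i ∈ Icc 2 b, |ct (i, 1)| ^ k = ((i - 1 : ℕ) : ℤ)^k := by
    intro i hi
    simp only [mem_Icc] at hi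
    have h0 : ct (i, 1) = -(((i - 1 : ℕ)) : ℤ) := by
      unfold ct
      rw [Nat.cast_sub (show 1 ≤ i by omega)]
      try push_cast
      try ring
    rw [h0, abs_neg, abs_of_nonneg (Int.natCast_nonneg _)]
  -- cardinality split
  have c1 : (Y.filter fun p => p.1 = 1).card = a := by
    rw [Yrow1_eq hY, Finset.card_image_of_injective _ (fun x y h => by injection h), Nat.card_Icc]
    omega
  have c2 : (Y.filter fun p => ¬(p.1 = 1) ∧ p.2 = 1).card = b - 1 := by
    rw [Ycol1_eq hY, Finset.card_image_of_injective _ (fun x y h => by injection h), Nat.card_Icc]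
    omega
  have c3 := muY_card (Y := Y) hY
  have c4 := Finset.card_filter_add_card_filter_not (s := Y) (p := fun p => p.1 = 1)
  have c5 := Finset.card_filter_add_card_filter_not
      (s := Y.filter (fun p => ¬(p.1 = 1))) (p := fun p => p.2 = 1)
  rw [Finset.filter_filter, Finset.filter_filter] at c5
  have hcard : (muY Y).card + (a + b - 1) = Y.card := by omega
  refine ⟨hcard, ?_⟩
  -- m identity
  have hrows := card_eq_sum_rows (Y := Y) hY
  rw [← hb] at hrows
  have hsplitrow : ∑ i ∈ Icc 1 b, row Y i
      = a + (∑ t ∈ range (b-1), (row Y (t+2) - 1) + (b-1)) := by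
    have h0 : Icc 1 b = Ico 1 (b+1) := (Finset.Ico_add_one_right_eq_Icc 1 b).symm
    rw [h0, ← Finset.sum_Ico_consecutive _ (show 1 ≤ 2 by omega) (show 2 ≤ b+1 by omega)]
    have h1 : ∑ i ∈ Ico 1 2, row Y i = a := by
      have hs : Ico 1 2 = {1} := by ext x; simp only [Finset.mem_Ico, Finset.mem_singleton]; omega
      rw [hs, Finset.sum_singleton]
    have h2 : ∑ i ∈ Ico 2 (b+1), row Y i
        = ∑ t ∈ range (b-1), (row Y (t+2) - 1) + (b-1) := by
      rw [Finset.sum_Ico_eq_sum_range]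
      have e : b+1-2 = b-1 := by omega
      rw [e]
      have h3 : ∀ t ∈ range (b-1), row Y (2+t) = (row Y (t+2) - 1) + 1 := by
        intro t ht
        rw [Finset.mem_range] at ht
        rw [show 2+t = t+2 by omega]
        have := hrow_ge (t+2) (by omega) (by omega)
        omega
      rw [Finset.sum_congr rfl h3, Finset.sum_add_distrib, Finset.sum_const, Finset.card_range,
        smul_eq_mul, mul_one]
    rw [h1, h2]
  have hmsum : (muY Y).card = ∑ t ∈ range (b-1), (row Y (t+2) - 1) := by omega
  -- sum decompositions
  have SYhk := hsplit (fun u => hk Y u ^ k)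
  have SYct := hsplit (fun u => |ct u| ^ k)
  have E1 : ∑ j ∈ Icc 1 a, hk Y (1, j) ^ k
      = ∑ j ∈ Icc 1 a, ((a + col Y j - j : ℕ) : ℤ)^k := Finset.sum_congr rfl hkrow1
  have E2 : ∑ i ∈ Icc 2 b, hk Y (i, 1) ^ k
      = ∑ i ∈ Icc 2 b, ((b + row Y i - i : ℕ) : ℤ)^k := Finset.sum_congr rfl hkcol1
  have E3 : ∑ v ∈ muY Y, hk Y (v.1 + 1, v.2 + 1) ^ k = ∑ v ∈ muY Y, hk (muY Y) v ^ k :=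
    Finset.sum_congr rfl (fun v hv => by rw [hk_muY hY hv])
  have E4 : ∑ j ∈ Icc 1 a, |ct (1, j)| ^ k
      = ∑ j ∈ Icc 1 a, ((j - 1 : ℕ) : ℤ)^k := Finset.sum_congr rfl ctrow1
  have E5 : ∑ i ∈ Icc 2 b, |ct (i, 1)| ^ k
      = ∑ i ∈ Icc 2 b, ((i - 1 : ℕ) : ℤ)^k := Finset.sum_congr rfl ctcol1
  have E6 : ∑ v ∈ muY Y, |ct (v.1 + 1, v.2 + 1)| ^ k = ∑ v ∈ muY Y, |ct v| ^ k := by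
    apply Finset.sum_congr rfl
    intro v _
    have : ct (v.1 + 1, v.2 + 1) = ct v := by unfold ct; push_cast; ring
    rw [this]
  -- range conversions
  have R2 : ∑ i ∈ Icc 2 b, ((b + row Y i - i : ℕ) : ℤ)^k
      = ∑ t ∈ range (b-1), ((b + row Y (t+2) - (t+2) : ℕ) : ℤ)^k := by
    rw [← Finset.Ico_add_one_right_eq_Icc, Finset.sum_Ico_eq_sum_range, show b+1-2 = b-1 by omega]
    refine Finset.sum_congr rfl (fun t _ => ?_)
    rw [show (2:ℕ)+t = t+2 by omega]
  have R3 : ∑ i ∈ Icc 2 b, ((a + i - 1 - row Y i : ℕ) : ℤ)^k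
      = ∑ t ∈ range (b-1), ((a + t + 1 - row Y (t+2) : ℕ) : ℤ)^k := by
    rw [← Finset.Ico_add_one_right_eq_Icc, Finset.sum_Ico_eq_sum_range, show b+1-2 = b-1 by omega]
    refine Finset.sum_congr rfl (fun t _ => ?_)
    rw [show (2:ℕ)+t = t+2 by omega]
    exact congrArg (fun n : ℕ => ((n:ℤ))^k) (by omega)
  have R4 : ∑ j ∈ Icc 1 a, ((j - 1 : ℕ) : ℤ)^k = ∑ t ∈ range a, ((t : ℕ) : ℤ)^k := by
    rw [← Finset.Ico_add_one_right_eq_Icc, Finset.sum_Ico_eq_sum_range, show a+1-1 = a by omega]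
    exact Finset.sum_congr rfl (fun t _ => congrArg (fun n : ℕ => ((n:ℤ))^k) (by omega))
  have R5 : ∑ i ∈ Icc 2 b, ((i - 1 : ℕ) : ℤ)^k = ∑ t ∈ range (b-1), ((t + 1 : ℕ) : ℤ)^k := by
    rw [← Finset.Ico_add_one_right_eq_Icc, Finset.sum_Ico_eq_sum_range, show b+1-2 = b-1 by omega]
    exact Finset.sum_congr rfl (fun t _ => congrArg (fun n : ℕ => ((n:ℤ))^k) (by omega))
  have R6 : ∑ t ∈ Icc 1 (a+b-1), ((t : ℕ) : ℤ)^k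
      = ∑ t ∈ range (a-1), ((t + 1 : ℕ) : ℤ)^k
        + (∑ t ∈ range (b-1), ((a + t : ℕ) : ℤ)^k + ((a + b - 1 : ℕ) : ℤ)^k) := by
    rw [← Finset.Ico_add_one_right_eq_Icc, Finset.sum_Ico_eq_sum_range, show a+b-1+1-1 = (a-1)+b by omega,
      sum_range_split]
    congr 1
    · exact Finset.sum_congr rfl (fun t _ => congrArg (fun n : ℕ => ((n:ℤ))^k) (by omega))
    · rw [show b = (b-1)+1 by omega, Finset.sum_range_succ]
      congr 1
      · exact Finset.sum_congr rfl (fun t _ => congrArg (fun n : ℕ => ((n:ℤ))^k) (by omega))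
      · exact congrArg (fun n : ℕ => ((n:ℤ))^k) (by omega)
  have R7 : ∑ t ∈ range a, ((t : ℕ) : ℤ)^k = ∑ t ∈ range (a-1), ((t + 1 : ℕ) : ℤ)^k := by
    rw [show a = (a-1)+1 by omega, Finset.sum_range_succ']
    simp [zero_pow (show k ≠ 0 by omega)]
  have R8 : ∑ t ∈ range (b-1), ((b - t - 1 : ℕ) : ℤ)^k
      = ∑ t ∈ range (b-1), ((t + 1 : ℕ) : ℤ)^k := by
    rw [← Finset.sum_range_reflect (fun t => ((t + 1 : ℕ) : ℤ)^k) (b-1)]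
    refine Finset.sum_congr rfl (fun t ht => ?_)
    rw [Finset.mem_range] at ht
    exact congrArg (fun n : ℕ => ((n:ℤ))^k) (by omega)
  have hcompl := complement_sum hY h11 k
  have hr : ∀ t, t < b - 1 → 1 ≤ row Y (t+2) ∧ row Y (t+2) ≤ a :=
    fun t ht => ⟨hrow_ge (t+2) (by omega) (by omega), hrow_le (t+2) (by omega)⟩
  have hstep := sum_step k hk3 a b ha1 hb1 (row Y) hr
  have hm1 : ((∑ t ∈ range (b-1), (row Y (t+2) - 1) : ℕ) : ℤ) = ((muY Y).card : ℤ) := by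
    exact_mod_cast congrArg (Nat.cast (R := ℤ)) hmsum.symm
  have hm2 : ((a + b - 1 + ∑ t ∈ range (b-1), (row Y (t+2) - 1) : ℕ) : ℤ) = (Y.card : ℤ) := by
    have he : a + b - 1 + ∑ t ∈ range (b-1), (row Y (t+2) - 1) = Y.card := by omega
    exact_mod_cast congrArg (Nat.cast (R := ℤ)) he
  rw [hm1, hm2] at hstep
  linarith [SYhk, SYct, E1, E2, E3, E4, E5, E6, R2, R3, R4, R5, R6, R7, R8, hcompl, hstep]

end MainStep
lemma weak_ineq (k : ℕ) (hk3 : 3 ≤ k) : ∀ N : ℕ, ∀ Y : Finset (ℕ × ℕ), IsYoung Y → Y.card = N →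
    ∑ u ∈ Y, hk Y u ^ k ≤ (N : ℤ)^k + ∑ u ∈ Y, |ct u|^k := by
  intro N
  induction N using Nat.strong_induction_on with
  | _ N IH =>
    intro Y hY hcard
    rcases Finset.eq_empty_or_nonempty Y with rfl | hne
    · simp only [Finset.card_empty] at hcard
      subst hcard
      simp [zero_pow (show k ≠ 0 by omega)]
    · obtain ⟨p, hp⟩ := hne
      have h11 : (1, 1) ∈ Y := hY.2 _ hp (1, 1) le_rfl le_rfl (hY.1 _ hp).1 (hY.1 _ hp).2
      obtain ⟨hcard2, hineq⟩ := main_step k hk3 hY h11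
      have ha1 : 1 ≤ row Y 1 := mem_le_row hY h11
      have hb1 : 1 ≤ col Y 1 := mem_le_col hY h11
      have hlt : (muY Y).card < N := by omega
      have hIH := IH (muY Y).card hlt (muY Y) (muY_isYoung hY) rfl
      rw [hcard] at hineq
      have hmnonneg : (0:ℤ) ≤ ((muY Y).card : ℤ) := Int.natCast_nonneg _
      linarith [hineq, hIH, hmnonneg]

theorem non_hook_strict (n : ℕ) (Y : Finset (ℕ × ℕ)) (hY : IsYoung Y)
    (hcard : Y.card = n) (hnothook : 2 ≤ row Y 2) (k : ℕ) (hk3 : 3 ≤ k) :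
    ∑ u ∈ Y, (hk Y u) ^ k < (n : ℤ) ^ k + ∑ u ∈ Y, |ct u| ^ k := by
  have h22 : (2, 2) ∈ Y := row_mem hY (by omega) (by omega) hnothook
  have h11 : (1, 1) ∈ Y := hY.2 _ h22 (1, 1) le_rfl le_rfl (by omega) (by omega)
  obtain ⟨hcard2, hineq⟩ := main_step k hk3 hY h11
  have h11mu : (1, 1) ∈ muY Y := (mem_muY hY).mpr ⟨le_rfl, le_rfl, h22⟩
  have hm1 : 1 ≤ (muY Y).card := Finset.card_pos.mpr ⟨_, h11mu⟩
  have hIH := weak_ineq k hk3 (muY Y).card (muY Y) (muY_isYoung hY) rfl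
  rw [hcard] at hineq
  have hm1' : (1:ℤ) ≤ ((muY Y).card : ℤ) := by exact_mod_cast hm1
  linarith [hineq, hIH, hm1']
end

section
/- For any partition λ of n, Σ_{u∈λ} h(u) − Σ_{u∈λ} |c(u)| − n equals the number of pairs (u, v) of cells of λ such that v ∈ H(u) and u, v do not lie in the same diagonal hook; in particular this quantity is non-negative. -/
open Finset

/-- The hook `H(u)` of a cell `u = (i, j)`: cells `(k, l) ∈ Y` with
`(k = i ∧ l ≥ j)` or `(l = j ∧ k ≥ i)`. -/
def hookSet (Y : Finset (ℕ × ℕ)) (u : ℕ × ℕ) : Finset (ℕ × ℕ) :=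
  Y.filter fun v => (v.1 = u.1 ∧ u.2 ≤ v.2) ∨ (v.2 = u.2 ∧ u.1 ≤ v.1)

lemma young_mem {Y : Finset (ℕ × ℕ)} (hY : IsYoung Y) {i j k l : ℕ}
    (h : (i, j) ∈ Y) (hk1 : 1 ≤ k) (hl1 : 1 ≤ l) (hki : k ≤ i) (hlj : l ≤ j) :
    (k, l) ∈ Y :=
  hY.2 _ h (k, l) hk1 hl1 hki hlj

lemma mem_row_iff {Y : Finset (ℕ × ℕ)} (hY : IsYoung Y) {i : ℕ} (l : ℕ) :
    (i, l) ∈ Y ↔ 1 ≤ l ∧ l ≤ row Y i := by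
  constructor
  · intro h
    refine ⟨(hY.1 _ h).2, ?_⟩
    have hsub : (Icc 1 l).image (fun m => (i, m)) ⊆ Y.filter fun p => p.1 = i := by
      intro p hp
      simp only [mem_image, mem_Icc] at hp
      obtain ⟨m, ⟨hm1, hml⟩, rfl⟩ := hp
      exact mem_filter.2 ⟨young_mem hY h (hY.1 _ h).1 hm1 le_rfl hml, rfl⟩
    have := card_le_card hsub
    rwa [card_image_of_injective _ (fun a b hab => by simpa using hab),
      Nat.card_Icc, Nat.add_sub_cancel] at this
  · rintro ⟨hl1, hlr⟩
    by_contra hnot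
    have hsub : (Y.filter fun p => p.1 = i) ⊆ (Icc 1 (l - 1)).image (fun m => (i, m)) := by
      intro p hp
      simp only [mem_filter] at hp
      obtain ⟨hpY, hp1⟩ := hp
      obtain ⟨a, b⟩ := p
      simp only at hp1
      subst hp1
      simp only [mem_image, mem_Icc]
      refine ⟨b, ⟨(hY.1 _ hpY).2, ?_⟩, rfl⟩
      by_contra hb
      push_neg at hb
      exact hnot (young_mem hY hpY (hY.1 _ hpY).1 hl1 le_rfl (by omega))
    have := card_le_card hsub
    have hc := card_image_le (s := Icc 1 (l - 1)) (f := fun m => (i, m))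
    rw [Nat.card_Icc] at hc
    unfold row at hlr
    omega

lemma mem_col_iff {Y : Finset (ℕ × ℕ)} (hY : IsYoung Y) {j : ℕ} (k : ℕ) :
    (k, j) ∈ Y ↔ 1 ≤ k ∧ k ≤ col Y j := by
  constructor
  · intro h
    refine ⟨(hY.1 _ h).1, ?_⟩
    have hsub : (Icc 1 k).image (fun m => (m, j)) ⊆ Y.filter fun p => p.2 = j := by
      intro p hp
      simp only [mem_image, mem_Icc] at hp
      obtain ⟨m, ⟨hm1, hml⟩, rfl⟩ := hp
      exact mem_filter.2 ⟨young_mem hY h hm1 (hY.1 _ h).2 hml le_rfl, rfl⟩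
    have := card_le_card hsub
    rwa [card_image_of_injective _ (fun a b hab => by simpa using hab),
      Nat.card_Icc, Nat.add_sub_cancel] at this
  · rintro ⟨hk1, hkc⟩
    by_contra hnot
    have hsub : (Y.filter fun p => p.2 = j) ⊆ (Icc 1 (k - 1)).image (fun m => (m, j)) := by
      intro p hp
      simp only [mem_filter] at hp
      obtain ⟨hpY, hp2⟩ := hp
      obtain ⟨a, b⟩ := p
      simp only at hp2
      subst hp2
      simp only [mem_image, mem_Icc]
      refine ⟨a, ⟨(hY.1 _ hpY).1, ?_⟩, rfl⟩
      by_contra hb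
      push_neg at hb
      exact hnot (young_mem hY hpY hk1 (hY.1 _ hpY).2 (by omega) le_rfl)
    have := card_le_card hsub
    have hc := card_image_le (s := Icc 1 (k - 1)) (f := fun m => (m, j))
    rw [Nat.card_Icc] at hc
    unfold col at hkc
    omega

lemma hookSet_eq {Y : Finset (ℕ × ℕ)} (hY : IsYoung Y) {i j : ℕ} (h : (i, j) ∈ Y) :
    hookSet Y (i, j) =
      ((Icc j (row Y i)).image fun l => (i, l)) ∪ ((Icc i (col Y j)).image fun k => (k, j)) := by
  ext ⟨a, b⟩
  simp only [hookSet, mem_filter, mem_union, mem_image, mem_Icc]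
  constructor
  · rintro ⟨hab, (⟨rfl, hjb⟩ | ⟨rfl, hia⟩)⟩
    · exact Or.inl ⟨b, ⟨hjb, ((mem_row_iff hY b).1 hab).2⟩, rfl⟩
    · exact Or.inr ⟨a, ⟨hia, ((mem_col_iff hY a).1 hab).2⟩, rfl⟩
  · rintro (⟨l, ⟨hjl, hlr⟩, he⟩ | ⟨k, ⟨hik, hkc⟩, he⟩)
    · obtain ⟨rfl, rfl⟩ : a = i ∧ b = l := by simpa [Prod.ext_iff] using he.symm
      exact ⟨(mem_row_iff hY b).2 ⟨le_trans (hY.1 _ h).2 hjl, hlr⟩, Or.inl ⟨rfl, hjl⟩⟩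
    · obtain ⟨rfl, rfl⟩ : a = k ∧ b = j := by simpa [Prod.ext_iff] using he.symm
      exact ⟨(mem_col_iff hY a).2 ⟨le_trans (hY.1 _ h).1 hik, hkc⟩, Or.inr ⟨rfl, hik⟩⟩

lemma hk_eq_card {Y : Finset (ℕ × ℕ)} (hY : IsYoung Y) {u : ℕ × ℕ} (h : u ∈ Y) :
    hk Y u = ((hookSet Y u).card : ℤ) := by
  obtain ⟨i, j⟩ := u
  have hjr : j ≤ row Y i := ((mem_row_iff hY j).1 h).2
  have hic : i ≤ col Y j := ((mem_col_iff hY i).1 h).2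
  rw [hookSet_eq hY h]
  have hint : ((Icc j (row Y i)).image fun l => (i, l)) ∩
      ((Icc i (col Y j)).image fun k => (k, j)) = {(i, j)} := by
    ext ⟨a, b⟩
    simp only [mem_inter, mem_image, mem_Icc, mem_singleton, Prod.ext_iff]
    constructor
    · rintro ⟨⟨l, ⟨hjl, hlr⟩, he1, he2⟩, ⟨k, ⟨hik, hkc⟩, he3, he4⟩⟩
      exact ⟨he1.symm, he4.symm⟩
    · rintro ⟨rfl, rfl⟩
      exact ⟨⟨b, ⟨le_rfl, hjr⟩, rfl, rfl⟩, ⟨a, ⟨le_rfl, hic⟩, rfl, rfl⟩⟩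
  have hcard := card_union_add_card_inter
    ((Icc j (row Y i)).image fun l => (i, l)) ((Icc i (col Y j)).image fun k => (k, j))
  rw [hint, card_singleton, card_image_of_injOn (fun a _ b _ hab => by simpa using hab), card_image_of_injOn (fun a _ b _ hab => by simpa using hab),
    Nat.card_Icc, Nat.card_Icc] at hcard
  have h1 : row Y i + 1 - j = row Y i + 1 - j := rfl
  unfold hk
  simp only
  omega

lemma diag_count_eq {Y : Finset (ℕ × ℕ)} (hY : IsYoung Y) {k l : ℕ} (h : (k, l) ∈ Y) :
    (Y.filter fun u => (k, l) ∈ hookSet Y u ∧ min k l = min u.1 u.2).card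
      = max k l + 1 - min k l := by
  rcases le_total k l with hkl | hlk
  · have hset : (Y.filter fun u => (k, l) ∈ hookSet Y u ∧ min k l = min u.1 u.2)
        = (Icc k l).image fun j => (k, j) := by
      ext ⟨a, b⟩
      simp only [mem_filter, hookSet, mem_image, mem_Icc, Prod.ext_iff]
      constructor
      · rintro ⟨habY, ⟨hklY, hor⟩, hmin⟩
        rcases hor with ⟨rfl, hbl⟩ | ⟨rfl, hak⟩
        · refine ⟨b, ⟨?_, hbl⟩, rfl, rfl⟩
          omega
        · refine ⟨l, ⟨?_, le_rfl⟩, ?_, rfl⟩ <;> omega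
      · rintro ⟨m, ⟨hkm, hml⟩, rfl, rfl⟩
        have hk1 := (hY.1 _ h).1
        refine ⟨young_mem hY h hk1 (by omega) le_rfl hml, ⟨h, Or.inl ⟨rfl, hml⟩⟩, by omega⟩
    rw [hset, card_image_of_injOn (fun a _ b _ hab => by simpa using hab), Nat.card_Icc]
    omega
  · have hset : (Y.filter fun u => (k, l) ∈ hookSet Y u ∧ min k l = min u.1 u.2)
        = (Icc l k).image fun i => (i, l) := by
      ext ⟨a, b⟩
      simp only [mem_filter, hookSet, mem_image, mem_Icc, Prod.ext_iff]
      constructor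
      · rintro ⟨habY, ⟨hklY, hor⟩, hmin⟩
        rcases hor with ⟨rfl, hbl⟩ | ⟨rfl, hak⟩
        · refine ⟨k, ⟨?_, le_rfl⟩, rfl, ?_⟩ <;> omega
        · refine ⟨a, ⟨?_, hak⟩, rfl, rfl⟩
          omega
      · rintro ⟨m, ⟨hlm, hmk⟩, rfl, rfl⟩
        have hl1 := (hY.1 _ h).2
        refine ⟨young_mem hY h (by omega) hl1 hmk le_rfl, ⟨h, Or.inr ⟨rfl, hmk⟩⟩, by omega⟩
    rw [hset, card_image_of_injOn (fun a _ b _ hab => by simpa using hab), Nat.card_Icc]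
    omega

theorem hook_sub_content_sub_n (n : ℕ) (Y : Finset (ℕ × ℕ)) (hY : IsYoung Y)
    (hcard : Y.card = n) :
    ((∑ u ∈ Y, hk Y u) - (∑ u ∈ Y, |ct u|) - n
        = (((Y ×ˢ Y).filter fun pq =>
            pq.2 ∈ hookSet Y pq.1 ∧ min pq.2.1 pq.2.2 ≠ min pq.1.1 pq.1.2).card : ℤ)) ∧
      (n : ℤ) + ∑ u ∈ Y, |ct u| ≤ ∑ u ∈ Y, hk Y u := by
  classical
  set T := (Y ×ˢ Y).filter fun pq => pq.2 ∈ hookSet Y pq.1 with hTdef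
  set S := (Y ×ˢ Y).filter fun pq =>
      pq.2 ∈ hookSet Y pq.1 ∧ min pq.2.1 pq.2.2 = min pq.1.1 pq.1.2 with hSdef
  set D := (Y ×ˢ Y).filter fun pq =>
      pq.2 ∈ hookSet Y pq.1 ∧ min pq.2.1 pq.2.2 ≠ min pq.1.1 pq.1.2 with hDdef
  -- T counts total hook incidences
  have hT : T.card = ∑ u ∈ Y, (hookSet Y u).card := by
    rw [hTdef, card_filter, sum_product]
    refine sum_congr rfl fun u hu => ?_
    rw [← card_filter]
    congr 1
    ext v
    simp only [mem_filter, hookSet]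
    tauto
  have hTsum : ∑ u ∈ Y, hk Y u = (T.card : ℤ) := by
    rw [hT, Nat.cast_sum]
    exact sum_congr rfl fun u hu => hk_eq_card hY hu
  -- S counts same-diagonal incidences
  have hS : S.card = ∑ v ∈ Y,
      (Y.filter fun u => v ∈ hookSet Y u ∧ min v.1 v.2 = min u.1 u.2).card := by
    rw [hSdef, card_filter, sum_product_right]
    exact sum_congr rfl fun v hv => (card_filter _ _).symm
  have hSsum : (S.card : ℤ) = (n : ℤ) + ∑ u ∈ Y, |ct u| := by
    rw [hS, Nat.cast_sum]
    have : ∀ v ∈ Y, ((Y.filter fun u => v ∈ hookSet Y u ∧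
        min v.1 v.2 = min u.1 u.2).card : ℤ) = |ct v| + 1 := by
      rintro ⟨k, l⟩ hv
      rw [diag_count_eq hY hv]
      have hml : min k l ≤ max k l := min_le_max
      unfold ct
      simp only
      rcases le_total k l with hkl | hlk
      · rw [abs_of_nonneg (by omega : (0:ℤ) ≤ (l:ℤ) - k)]
        omega
      · rw [abs_of_nonpos (by omega : (l:ℤ) - k ≤ 0)]
        omega
    rw [sum_congr rfl this, sum_add_distrib]
    simp [hcard]
    ring
  -- split T into S and D
  have hsplit : S.card + D.card = T.card := by
    have h := card_filter_add_card_filter_not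
      (s := T) (p := fun pq => min pq.2.1 pq.2.2 = min pq.1.1 pq.1.2)
    rw [hTdef, filter_filter, filter_filter] at h
    rw [hSdef, hDdef, hTdef]
    convert h using 3
  have hD : (0 : ℤ) ≤ (D.card : ℤ) := Nat.cast_nonneg _
  constructor
  · have : (T.card : ℤ) = (S.card : ℤ) + (D.card : ℤ) := by exact_mod_cast hsplit.symm
    rw [hTsum, this, hSsum]
    ring
  · have : (T.card : ℤ) = (S.card : ℤ) + (D.card : ℤ) := by exact_mod_cast hsplit.symm
    rw [hTsum, this, hSsum]
    linarith
end
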